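/- For every n ≥ 1, let T_n be the Kripke tree over AP = {p} defined as follows: T_n has a main infinite path π from the root on which p never holds; the node π(n+1) has π(n+2) as its unique child; and for every i ∈ ℕ with i ≠ n+1, π(i) has exactly one additional child w_i not on π, and the subtree rooted at w_i is a single infinite path whose labels form the word {p}∅^ω. Then for every n ≥ 1, every position 0 ≤ i ≤ n, and every CCTL* path formula ψ with |ψ| ≤ n − i: (T_{n+1}, π_{n+1}, i) ⊨ ψ if and only if (T_{n+1}, π_{n+1}, i+1) ⊨ ψ, where π_{n+1} is the main path of T_{n+1}. -/

import Mathlib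

mutual
/-- State formulas of Counting-CTL* (CCTL*). -/
inductive SForm (AP : Type) : Type where
  | top : SForm AP
  | atom : AP → SForm AP
  | not : SForm AP → SForm AP
  | and : SForm AP → SForm AP → SForm AP
  | ex : PForm AP → SForm AP
  | cnt : ℕ → SForm AP → SForm AP
/-- Path formulas of Counting-CTL* (CCTL*). -/
inductive PForm (AP : Type) : Type where
  | state : SForm AP → PForm AP
  | not : PForm AP → PForm AP
  | and : PForm AP → PForm AP → PForm AP
  | next : PForm AP → PForm AP
  | until_ : PForm AP → PForm AP → PForm AP
end

/-- `T` is a tree: nonempty and prefix-closed. -/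
def IsTree {D : Type} (T : Set (List D)) : Prop :=
  [] ∈ T ∧ ∀ (w : List D) (d : D), w ++ [d] ∈ T → w ∈ T

/-- Every node of `T` has a child. -/
def NonBlocking {D : Type} (T : Set (List D)) : Prop :=
  ∀ w ∈ T, ∃ d : D, w ++ [d] ∈ T

/-- `π` is an infinite path of `T` starting at node `w`. -/
def IsPathFrom {D : Type} (T : Set (List D)) (π : ℕ → List D) (w : List D) : Prop :=
  π 0 = w ∧ ∀ i, π i ∈ T ∧ ∃ d : D, π (i + 1) = π i ++ [d]

mutual
/-- Satisfaction of a CCTL* state formula at a node of the Kripke tree `(T, Lab)`. -/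
def SatS {D AP : Type} (T : Set (List D)) (Lab : List D → Set AP) :
    SForm AP → List D → Prop
  | .top, _ => True
  | .atom p, w => p ∈ Lab w
  | .not φ, w => ¬ SatS T Lab φ w
  | .and φ ψ, w => SatS T Lab φ w ∧ SatS T Lab ψ w
  | .ex ψ, w => ∃ π : ℕ → List D, IsPathFrom T π w ∧ SatP T Lab ψ π 0
  | .cnt k φ, w => ∃ s : Finset D, k ≤ s.card ∧
      ∀ d ∈ s, w ++ [d] ∈ T ∧ SatS T Lab φ (w ++ [d])
/-- Satisfaction of a CCTL* path formula at position `i` of the infinite path `π`. -/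
def SatP {D AP : Type} (T : Set (List D)) (Lab : List D → Set AP) :
    PForm AP → (ℕ → List D) → ℕ → Prop
  | .state φ, π, i => SatS T Lab φ (π i)
  | .not ψ, π, i => ¬ SatP T Lab ψ π i
  | .and ψ χ, π, i => SatP T Lab ψ π i ∧ SatP T Lab χ π i
  | .next ψ, π, i => SatP T Lab ψ π (i + 1)
  | .until_ ψ χ, π, i =>
      ∃ j, i ≤ j ∧ SatP T Lab χ π j ∧ ∀ k, i ≤ k → k < j → SatP T Lab ψ π k
end

mutual
/-- Length (number of symbols) of a CCTL* state formula. -/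
def sizeS {AP : Type} : SForm AP → ℕ
  | .top => 1
  | .atom _ => 1
  | .not φ => 1 + sizeS φ
  | .and φ ψ => 1 + sizeS φ + sizeS ψ
  | .ex ψ => 1 + sizeP ψ
  | .cnt _ φ => 1 + sizeS φ
/-- Length (number of symbols) of a CCTL* path formula. -/
def sizeP {AP : Type} : PForm AP → ℕ
  | .state φ => sizeS φ
  | .not ψ => 1 + sizeP ψ
  | .and ψ χ => 1 + sizeP ψ + sizeP χ
  | .next ψ => 1 + sizeP ψ
  | .until_ ψ χ => 1 + sizeP ψ + sizeP χ
end

/-- The `j`-th node of the main path: `0^j`. -/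
def mainNode (j : ℕ) : List ℕ := List.replicate j 0

/-- The Kripke tree `T_m` (over directions `ℕ`): its nodes are the main path
`π(j) = 0^j`, and for each `i ≠ m + 1` a side path `0^i · 1 · 0^k` hanging off
`π(i)` (so `π(m+1)` has a unique child, and every other `π(i)` has exactly one
additional child `w_i = 0^i · 1`). -/
def Ttree (m : ℕ) : Set (List ℕ) :=
  {w | (∃ j, w = mainNode j) ∨
       ∃ i k, i ≠ m + 1 ∧ w = mainNode i ++ 1 :: mainNode k}

/-- The labelling of `T_m`: the proposition `p` holds exactly at the first node
`0^i · 1` of a side path, so each side path carries the word `{p}∅^ω` and `p`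
never holds on the main path. -/
def KLab : List ℕ → Set Unit := fun w => {_u | ∃ i, w = mainNode i ++ [1]}

namespace Stmt14

/-- side node `0^a · 1 · 0^k`. -/
def sideNode (a k : ℕ) : List ℕ := mainNode a ++ 1 :: mainNode k

/-- the (unique) path of the tree staying on the side branch at `a`,
starting at depth `k` inside it. -/
def sidePath (a k : ℕ) : ℕ → List ℕ := fun j => sideNode a (k + j)

/-- the main path starting at `π(c)`. -/
def mpath (c : ℕ) : ℕ → List ℕ := fun j => mainNode (j + c)

/-- the path starting at `π(c)`, following the main path up to `π(t)` and
then branching into the side branch at `t`. -/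
def pA (c t : ℕ) : ℕ → List ℕ :=
  fun j => if c + j ≤ t then mainNode (c + j) else sideNode t (c + j - t - 1)

theorem mainNode_succ (j : ℕ) : mainNode (j + 1) = mainNode j ++ [0] :=
  List.replicate_succ' ..

theorem mainNode_length (j : ℕ) : (mainNode j).length = j := by simp [mainNode]

theorem sideNode_succ (a k : ℕ) : sideNode a (k + 1) = sideNode a k ++ [0] := by
  simp [sideNode, mainNode_succ, List.append_assoc]

theorem mem_mainNode {x j : ℕ} (h : x ∈ mainNode j) : x = 0 :=
  List.eq_of_mem_replicate h

theorem mainNode_ne_sideNode (j a k : ℕ) : mainNode j ≠ sideNode a k := by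
  intro h
  have h1 : (1 : ℕ) ∈ mainNode j := by
    rw [h, sideNode]; exact List.mem_append_right _ List.mem_cons_self
  have := mem_mainNode h1
  omega

theorem repl_split {a a' : ℕ} {u u' : List ℕ}
    (h : mainNode a ++ 1 :: u = mainNode a' ++ 1 :: u') :
    a = a' ∧ u = u' := by
  induction a generalizing a' with
  | zero =>
    cases a' with
    | zero => simpa [mainNode] using h
    | succ a' => simp [mainNode, List.replicate_succ] at h
  | succ a ih =>
    cases a' with
    | zero => simp [mainNode, List.replicate_succ] at h
    | succ a' =>
      simp only [mainNode, List.replicate_succ, List.cons_append, List.cons.injEq] at h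
      obtain ⟨ha, hu⟩ := ih h.2
      exact ⟨by omega, hu⟩

theorem sideNode_inj {a k a' k' : ℕ} (h : sideNode a k = sideNode a' k') :
    a = a' ∧ k = k' := by
  obtain ⟨h1, h2⟩ := repl_split h
  refine ⟨h1, ?_⟩
  have := congrArg List.length h2
  simpa [mainNode] using this

theorem mainNode_mem (m j : ℕ) : mainNode j ∈ Ttree m := Or.inl ⟨j, rfl⟩

theorem sideNode_mem {m a : ℕ} (k : ℕ) (ha : a ≠ m + 1) : sideNode a k ∈ Ttree m :=
  Or.inr ⟨a, k, ha, rfl⟩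

theorem sideNode_mem_iff {m a k : ℕ} : sideNode a k ∈ Ttree m ↔ a ≠ m + 1 := by
  constructor
  · rintro (⟨j, hj⟩ | ⟨i, k', hi, he⟩)
    · exact absurd hj.symm (mainNode_ne_sideNode _ _ _)
    · obtain ⟨h1, _⟩ := repl_split he
      omega
  · exact sideNode_mem k

theorem childMain {m c d : ℕ} :
    mainNode c ++ [d] ∈ Ttree m ↔ (d = 0 ∨ (d = 1 ∧ c ≠ m + 1)) := by
  constructor
  · rintro (⟨j, hj⟩ | ⟨i, k, hi, he⟩)
    · have hd : d ∈ mainNode j := by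
        rw [← hj]; exact List.mem_append_right _ List.mem_cons_self
      exact Or.inl (mem_mainNode hd)
    · -- mainNode c ++ [d] = sideNode i k
      rcases Nat.eq_zero_or_pos d with h0 | hpos
      · subst h0
        have : mainNode (c + 1) = sideNode i k := by
          rw [mainNode_succ]; exact he
        exact absurd this (mainNode_ne_sideNode _ _ _)
      · have hd1 : d = 1 := by
          have hd : d ∈ mainNode i ++ 1 :: mainNode k := by
            rw [← he]; exact List.mem_append_right _ List.mem_cons_self
          rcases List.mem_append.1 hd with h | h
          · have := mem_mainNode h; omega
          · rcases List.mem_cons.1 h with h | h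
            · exact h
            · have := mem_mainNode h; omega
        subst hd1
        have he' : mainNode c ++ 1 :: mainNode 0 = mainNode i ++ 1 :: mainNode k := he
        obtain ⟨h1, h2⟩ := repl_split he'
        have hk : k = 0 := by
          have := congrArg List.length h2; simpa [mainNode] using this.symm
        exact Or.inr ⟨rfl, by omega⟩
  · rintro (h0 | ⟨h1, hc⟩)
    · subst h0; rw [← mainNode_succ]; exact mainNode_mem _ _
    · subst h1
      have : mainNode c ++ [1] = sideNode c 0 := rfl
      rw [this]; exact sideNode_mem 0 hc

theorem childSide {m a k d : ℕ} :
    sideNode a k ++ [d] ∈ Ttree m ↔ (d = 0 ∧ a ≠ m + 1) := by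
  constructor
  · rintro (⟨j, hj⟩ | ⟨i, k', hi, he⟩)
    · exfalso
      have h1 : (1 : ℕ) ∈ mainNode j := by
        rw [← hj, sideNode]
        exact List.mem_append_left _ (List.mem_append_right _ List.mem_cons_self)
      have := mem_mainNode h1; omega
    · have he' : mainNode a ++ 1 :: (mainNode k ++ [d]) = mainNode i ++ 1 :: mainNode k' := by
        rw [← he, sideNode]; simp [List.append_assoc]
      obtain ⟨h1, h2⟩ := repl_split he'
      have hd : d ∈ mainNode k' := by
        rw [← h2]; exact List.mem_append_right _ List.mem_cons_self
      have := mem_mainNode hd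
      exact ⟨this, by omega⟩
  · rintro ⟨h0, ha⟩
    subst h0
    rw [← sideNode_succ]
    exact sideNode_mem _ ha

theorem klab_main (c : ℕ) (u : Unit) : u ∉ KLab (mainNode c) := by
  rintro ⟨i, hi⟩
  have : mainNode c = sideNode i 0 := hi
  exact mainNode_ne_sideNode _ _ _ this

theorem klab_side {a k : ℕ} (u : Unit) : u ∈ KLab (sideNode a k) ↔ k = 0 := by
  constructor
  · rintro ⟨i, hi⟩
    have : sideNode a k = sideNode i 0 := hi
    exact (sideNode_inj this).2
  · rintro rfl; exact ⟨a, rfl⟩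

end Stmt14

namespace Stmt14

theorem isPath_mpath (m c : ℕ) : IsPathFrom (Ttree m) (mpath c) (mainNode c) := by
  refine ⟨by simp [mpath], fun i => ⟨mainNode_mem _ _, ⟨0, ?_⟩⟩⟩
  show mainNode (i + 1 + c) = mainNode (i + c) ++ [0]
  rw [show i + 1 + c = (i + c) + 1 by omega, mainNode_succ]

theorem isPath_sidePath {m a : ℕ} (k : ℕ) (ha : a ≠ m + 1) :
    IsPathFrom (Ttree m) (sidePath a k) (sideNode a k) := by
  refine ⟨by simp [sidePath], fun i => ⟨sideNode_mem _ ha, ⟨0, ?_⟩⟩⟩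
  show sideNode a (k + (i + 1)) = sideNode a (k + i) ++ [0]
  rw [show k + (i + 1) = (k + i) + 1 by omega, sideNode_succ]

theorem pA_main {c t : ℕ} (j : ℕ) (h : c + j ≤ t) : pA c t j = mainNode (c + j) :=
  if_pos h

theorem pA_side {c t : ℕ} (j : ℕ) (h : ¬ c + j ≤ t) :
    pA c t j = sideNode t (c + j - t - 1) := if_neg h

theorem isPath_pA {m c t : ℕ} (hct : c ≤ t) (ht : t ≠ m + 1) :
    IsPathFrom (Ttree m) (pA c t) (mainNode c) := by
  refine ⟨by rw [pA_main 0 (by omega)]; simp, fun i => ⟨?_, ?_⟩⟩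
  · by_cases h : c + i ≤ t
    · rw [pA_main i h]; exact mainNode_mem _ _
    · rw [pA_side i h]; exact sideNode_mem _ ht
  · by_cases h1 : c + i + 1 ≤ t
    · refine ⟨0, ?_⟩
      rw [pA_main i (by omega), pA_main (i+1) (by omega), ← mainNode_succ,
        show c + (i+1) = c + i + 1 by omega]
    · by_cases h2 : c + i ≤ t
      · -- c + i = t, branch now
        refine ⟨1, ?_⟩
        rw [pA_main i h2, pA_side (i+1) (by omega)]
        have h3 : c + i = t := by omega
        rw [show c + (i + 1) - t - 1 = 0 by omega, h3]
        rfl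
      · refine ⟨0, ?_⟩
        rw [pA_side i h2, pA_side (i+1) (by omega),
          show c + (i + 1) - t - 1 = (c + i - t - 1) + 1 by omega, sideNode_succ]

theorem classifySide {m a k : ℕ} {π : ℕ → List ℕ}
    (h : IsPathFrom (Ttree m) π (sideNode a k)) : ∀ j, π j = sideNode a (k + j) := by
  intro j
  induction j with
  | zero => simpa using h.1
  | succ j ih =>
    obtain ⟨d, hd⟩ := (h.2 j).2
    have hmem : sideNode a (k + j) ++ [d] ∈ Ttree m := by
      rw [← ih, ← hd]; exact (h.2 (j+1)).1
    obtain ⟨h0, -⟩ := childSide.1 hmem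
    subst h0
    rw [hd, ih, ← sideNode_succ, show k + j + 1 = k + (j+1) by omega]

theorem classifyMain {m c : ℕ} {π : ℕ → List ℕ}
    (h : IsPathFrom (Ttree m) π (mainNode c)) :
    (∀ j, π j = mainNode (c + j)) ∨
      (∃ t, c ≤ t ∧ t ≠ m + 1 ∧ ∀ j, π j = pA c t j) := by
  by_cases hall : ∀ j, π j = mainNode (c + j)
  · exact Or.inl hall
  · right
    push_neg at hall
    have hex : ∃ j, π j ≠ mainNode (c + j) := hall
    classical
    have hspec : π (Nat.find hex) ≠ mainNode (c + Nat.find hex) := Nat.find_spec hex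
    have hlt : ∀ j < Nat.find hex, π j = mainNode (c + j) := by
      intro j hj
      by_contra hc
      exact absurd (Nat.find_min hex hj) (by simpa using hc)
    have hne0 : Nat.find hex ≠ 0 := by
      intro h0
      apply hspec
      rw [h0]; simpa using h.1
    obtain ⟨j₁, hj₁⟩ : ∃ j₁, Nat.find hex = j₁ + 1 := ⟨Nat.find hex - 1, by omega⟩
    rw [hj₁] at hspec hlt
    obtain ⟨d, hd⟩ := (h.2 j₁).2
    have hj₁ : π j₁ = mainNode (c + j₁) := hlt j₁ (by omega)
    have hmem : mainNode (c + j₁) ++ [d] ∈ Ttree m := by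
      rw [← hj₁, ← hd]; exact (h.2 (j₁+1)).1
    rcases childMain.1 hmem with h0 | ⟨h1, hcm⟩
    · exfalso
      apply hspec
      rw [hd, hj₁, h0, ← mainNode_succ, show c + j₁ + 1 = c + (j₁ + 1) by omega]
    · subst h1
      refine ⟨c + j₁, by omega, hcm, ?_⟩
      have hside : ∀ i, π (j₁ + 1 + i) = sideNode (c + j₁) i := by
        intro i
        induction i with
        | zero => rw [hd, hj₁]; rfl
        | succ i ih =>
          obtain ⟨d', hd'⟩ := (h.2 (j₁ + 1 + i)).2
          have hmem' : sideNode (c + j₁) i ++ [d'] ∈ Ttree m := by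
            rw [← ih, ← hd', show j₁ + 1 + i + 1 = j₁ + 1 + (i+1) by omega]
            exact (h.2 (j₁ + 1 + (i+1))).1
          obtain ⟨h0, -⟩ := childSide.1 hmem'
          subst h0
          rw [show j₁ + 1 + (i + 1) = (j₁ + 1 + i) + 1 by omega, hd', ih, sideNode_succ]
      intro j
      by_cases hj : j ≤ j₁
      · rw [pA_main j (by omega)]
        rcases Nat.lt_or_ge j (j₁ + 1) with h' | h'
        · exact hlt j h'
        · omega
      · rw [pA_side j (by omega)]
        have : j = j₁ + 1 + (j - j₁ - 1) := by omega
        rw [this, hside (j - j₁ - 1),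
          show c + (j₁ + 1 + (j - j₁ - 1)) - (c + j₁) - 1 = j - j₁ - 1 by omega]

end Stmt14

namespace Stmt14

/-- `X`-depth of a path formula. -/
def xdP {AP : Type} : PForm AP → ℕ
  | .state _ => 0
  | .not ψ => xdP ψ
  | .and ψ χ => max (xdP ψ) (xdP χ)
  | .next ψ => xdP ψ + 1
  | .until_ ψ χ => max (xdP ψ) (xdP χ)

theorem sizeS_pos {AP : Type} (φ : SForm AP) : 1 ≤ sizeS φ := by
  cases φ <;> simp [sizeS] <;> omega

theorem sizeP_pos {AP : Type} (ψ : PForm AP) : 1 ≤ sizeP ψ := by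
  cases ψ with
  | state φ => exact sizeS_pos φ
  | _ => simp [sizeP] <;> omega

theorem xdP_lt {AP : Type} : ∀ (ψ : PForm AP), xdP ψ < sizeP ψ := by
  have H : ∀ (N : ℕ) (ψ : PForm AP), sizeP ψ ≤ N → xdP ψ < sizeP ψ := by
    intro N
    induction N with
    | zero => intro ψ h; have := sizeP_pos ψ; omega
    | succ N ih =>
      intro ψ h
      cases ψ with
      | state φ => simp [xdP, sizeP]; exact sizeS_pos _
      | not ψ => have := ih ψ (by simp [sizeP] at h; omega); simp [xdP, sizeP]; omega
      | and ψ χ =>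
        have h1 := ih ψ (by simp [sizeP] at h; omega)
        have h2 := ih χ (by simp [sizeP] at h; omega)
        simp only [xdP, sizeP]
        rcases max_choice (xdP ψ) (xdP χ) with he | he <;> rw [he] <;> omega
      | next ψ => have := ih ψ (by simp [sizeP] at h; omega); simp [xdP, sizeP]; omega
      | until_ ψ χ =>
        have h1 := ih ψ (by simp [sizeP] at h; omega)
        have h2 := ih χ (by simp [sizeP] at h; omega)
        simp only [xdP, sizeP]
        rcases max_choice (xdP ψ) (xdP χ) with he | he <;> rw [he] <;> omega
  exact fun ψ => H (sizeP ψ) ψ le_rfl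

/-- shifting positions along a path. -/
theorem satp_shift {D AP : Type} (T : Set (List D)) (L : List D → Set AP) :
    ∀ (ψ : PForm AP) (π : ℕ → List D) (k i : ℕ),
      SatP T L ψ (fun j => π (j + k)) i ↔ SatP T L ψ π (i + k) := by
  have H : ∀ (N : ℕ) (ψ : PForm AP), sizeP ψ ≤ N → ∀ (π : ℕ → List D) (k i : ℕ),
      SatP T L ψ (fun j => π (j + k)) i ↔ SatP T L ψ π (i + k) := by
    intro N
    induction N with
    | zero => intro ψ h; have := sizeP_pos ψ; omega
    | succ N ih =>
      intro ψ h π k i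
      cases ψ with
      | state φ => simp [SatP]
      | not ψ =>
        simp only [SatP]
        rw [ih ψ (by simp [sizeP] at h; omega)]
      | and ψ χ =>
        simp only [SatP]
        rw [ih ψ (by simp [sizeP] at h; omega), ih χ (by simp [sizeP] at h; omega)]
      | next ψ =>
        simp only [SatP]
        rw [ih ψ (by simp [sizeP] at h; omega), show i + 1 + k = i + k + 1 by omega]
      | until_ ψ χ =>
        have hψ := ih ψ (by simp [sizeP] at h; omega)
        have hχ := ih χ (by simp [sizeP] at h; omega)
        simp only [SatP]
        constructor
        · rintro ⟨j, hij, hc, hu⟩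
          refine ⟨j + k, by omega, (hχ π k j).1 hc, fun l h1 h2 => ?_⟩
          have := (hψ π k (l - k)).1 (hu (l - k) (by omega) (by omega))
          rw [show l - k + k = l by omega] at this
          exact this
        · rintro ⟨j, hij, hc, hu⟩
          refine ⟨j - k, by omega, ?_, fun l h1 h2 => ?_⟩
          · have := (hχ π k (j - k)).2 (by rw [show j - k + k = j by omega]; exact hc)
            exact this
          · exact (hψ π k l).2 (hu (l + k) (by omega) (by omega))
  exact fun ψ => H (sizeP ψ) ψ le_rfl

theorem pA_succ (c t : ℕ) : pA (c + 1) t = fun j => pA c t (j + 1) := by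
  funext j
  simp only [pA]
  rw [show c + 1 + j = c + (j + 1) by omega]

theorem mpath_succ (c : ℕ) : mpath (c + 1) = fun j => mpath c (j + 1) := by
  funext j
  simp only [mpath]
  rw [show j + (c + 1) = j + 1 + c by omega]

theorem satp_mpath {L : List ℕ → Set Unit} {m : ℕ} (ψ : PForm Unit) (c : ℕ) :
    SatP (Ttree m) L ψ (mpath c) 0 ↔ SatP (Ttree m) L ψ mainNode c := by
  have : mpath c = fun j => mainNode (j + c) := rfl
  rw [this, satp_shift, Nat.zero_add]

theorem satp_pA_succ {L : List ℕ → Set Unit} {m : ℕ} (ψ : PForm Unit) (c t : ℕ) :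
    SatP (Ttree m) L ψ (pA (c + 1) t) 0 ↔ SatP (Ttree m) L ψ (pA c t) 1 := by
  rw [pA_succ]
  have : (fun j => pA c t (j + 1)) = fun j => (pA c t) (j + 1) := rfl
  rw [this, satp_shift, Nat.zero_add]

end Stmt14

namespace Stmt14

/-- Rigidity of the side branches: satisfaction at a side node depends only on
the depth inside the side branch, not on where the branch is attached. -/
theorem RIG (m : ℕ) : ∀ N : ℕ,
    (∀ φ : SForm Unit, sizeS φ ≤ N → ∀ a b k, a ≠ m + 1 → b ≠ m + 1 →
      (SatS (Ttree m) KLab φ (sideNode a k) ↔ SatS (Ttree m) KLab φ (sideNode b k))) ∧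
    (∀ ψ : PForm Unit, sizeP ψ ≤ N → ∀ a b k j, a ≠ m + 1 → b ≠ m + 1 →
      (SatP (Ttree m) KLab ψ (sidePath a k) j ↔ SatP (Ttree m) KLab ψ (sidePath b k) j)) := by
  intro N
  induction N using Nat.strong_induction_on with
  | _ N ih =>
  have part1 : ∀ φ : SForm Unit, sizeS φ ≤ N → ∀ a b k, a ≠ m + 1 → b ≠ m + 1 →
      (SatS (Ttree m) KLab φ (sideNode a k) ↔ SatS (Ttree m) KLab φ (sideNode b k)) := by
    intro φ hφ a b k ha hb
    cases φ with
    | top => simp [SatS]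
    | atom p => simp only [SatS]; rw [klab_side, klab_side]
    | not φ' =>
      have hN : sizeS φ' < N := by simp [sizeS] at hφ; omega
      simp only [SatS]
      rw [(ih _ hN).1 φ' le_rfl a b k ha hb]
    | and φ₁ φ₂ =>
      have h1 : sizeS φ₁ < N := by simp [sizeS] at hφ; omega
      have h2 : sizeS φ₂ < N := by simp [sizeS] at hφ; omega
      simp only [SatS]
      rw [(ih _ h1).1 φ₁ le_rfl a b k ha hb, (ih _ h2).1 φ₂ le_rfl a b k ha hb]
    | ex ψ' =>
      have hN : sizeP ψ' < N := by simp [sizeS] at hφ; omega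
      have key : ∀ a b : ℕ, a ≠ m + 1 → b ≠ m + 1 →
          SatS (Ttree m) KLab (.ex ψ') (sideNode a k) →
          SatS (Ttree m) KLab (.ex ψ') (sideNode b k) := by
        rintro a b ha hb ⟨π, hπ, hs⟩
        have hcl : π = sidePath a k := funext (classifySide hπ)
        subst hcl
        refine ⟨sidePath b k, isPath_sidePath k hb, ?_⟩
        exact ((ih _ hN).2 ψ' le_rfl a b k 0 ha hb).1 hs
      exact ⟨key a b ha hb, key b a hb ha⟩
    | cnt K φ' =>
      have hN : sizeS φ' < N := by simp [sizeS] at hφ; omega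
      simp only [SatS]
      have hd : ∀ d : ℕ,
          (sideNode a k ++ [d] ∈ Ttree m ∧ SatS (Ttree m) KLab φ' (sideNode a k ++ [d])) ↔
          (sideNode b k ++ [d] ∈ Ttree m ∧ SatS (Ttree m) KLab φ' (sideNode b k ++ [d])) := by
        intro d
        rcases Nat.eq_zero_or_pos d with rfl | hd0
        · rw [← sideNode_succ, ← sideNode_succ]
          have hm1 : sideNode a (k+1) ∈ Ttree m := sideNode_mem _ ha
          have hm2 : sideNode b (k+1) ∈ Ttree m := sideNode_mem _ hb
          simp only [hm1, hm2, true_and]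
          exact (ih _ hN).1 φ' le_rfl a b (k+1) ha hb
        · have h1 : sideNode a k ++ [d] ∉ Ttree m := by
            rw [childSide]; omega
          have h2 : sideNode b k ++ [d] ∉ Ttree m := by
            rw [childSide]; omega
          simp [h1, h2]
      exact exists_congr fun s => and_congr Iff.rfl
        (forall_congr' fun d => forall_congr' fun _ => hd d)
  refine ⟨part1, ?_⟩
  intro ψ hψ a b k j ha hb
  cases ψ with
  | state φ =>
    simp only [SatP]
    exact part1 φ hψ a b (k + j) ha hb
  | not ψ' =>
    have hN : sizeP ψ' < N := by simp [sizeP] at hψ; omega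
    simp only [SatP]
    rw [(ih _ hN).2 ψ' le_rfl a b k j ha hb]
  | and ψ₁ ψ₂ =>
    have h1 : sizeP ψ₁ < N := by simp [sizeP] at hψ; omega
    have h2 : sizeP ψ₂ < N := by simp [sizeP] at hψ; omega
    simp only [SatP]
    rw [(ih _ h1).2 ψ₁ le_rfl a b k j ha hb, (ih _ h2).2 ψ₂ le_rfl a b k j ha hb]
  | next ψ' =>
    have hN : sizeP ψ' < N := by simp [sizeP] at hψ; omega
    simp only [SatP]
    exact (ih _ hN).2 ψ' le_rfl a b k (j+1) ha hb
  | until_ ψ₁ ψ₂ =>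
    have h1 : sizeP ψ₁ < N := by simp [sizeP] at hψ; omega
    have h2 : sizeP ψ₂ < N := by simp [sizeP] at hψ; omega
    simp only [SatP]
    exact exists_congr fun j' => and_congr Iff.rfl
      (and_congr ((ih _ h2).2 ψ₂ le_rfl a b k j' ha hb)
        (forall_congr' fun l => imp_congr Iff.rfl (imp_congr Iff.rfl
          ((ih _ h1).2 ψ₁ le_rfl a b k l ha hb))))

end Stmt14

namespace Stmt14

/-- `φ` cannot distinguish `π(c)` from `π(c+1)` when `|φ| ≤ (m-1) - c`. -/
def A1S (m : ℕ) (φ : SForm Unit) : Prop :=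
  ∀ c, sizeS φ + c + 1 ≤ m →
    (SatS (Ttree m) KLab φ (mainNode c) ↔ SatS (Ttree m) KLab φ (mainNode (c + 1)))

/-- Shifting along the main path. -/
def SHBP (m : ℕ) (ψ : PForm Unit) : Prop :=
  ∀ i, sizeP ψ + i + 1 ≤ m →
    (SatP (Ttree m) KLab ψ mainNode i ↔ SatP (Ttree m) KLab ψ mainNode (i + 1))

/-- Shifting along a path branching far beyond the `X`-depth of `ψ`. -/
def FARP (m : ℕ) (ψ : PForm Unit) : Prop :=
  ∀ c t j, c + j + xdP ψ < t → sizeP ψ + (c + j) + 1 ≤ m →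
    (SatP (Ttree m) KLab ψ (pA c t) j ↔ SatP (Ttree m) KLab ψ (pA c t) (j + 1))

/-- Comparing two branching paths with the same branching distance. -/
def NEARP (m : ℕ) (ψ : PForm Unit) : Prop :=
  ∀ c t j, c ≤ t → t + 2 ≤ m → sizeP ψ + t + 1 ≤ m + xdP ψ →
    (SatP (Ttree m) KLab ψ (pA c t) j ↔ SatP (Ttree m) KLab ψ (pA (c + 1) (t + 1)) j)

theorem master (m : ℕ) : ∀ N : ℕ,
    (∀ φ : SForm Unit, sizeS φ ≤ N → A1S m φ) ∧
    (∀ ψ : PForm Unit, sizeP ψ ≤ N → SHBP m ψ ∧ FARP m ψ ∧ NEARP m ψ) := by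
  intro N
  induction N using Nat.strong_induction_on with
  | _ N ih =>
  have part1 : ∀ φ : SForm Unit, sizeS φ ≤ N → A1S m φ := by
    intro φ hφ c hc
    cases φ with
    | top => simp [SatS]
    | atom p => exact iff_of_false (klab_main c p) (klab_main (c + 1) p)
    | not φ' =>
      have hN : sizeS φ' < N := by simp [sizeS] at hφ; omega
      simp only [SatS]
      rw [(ih _ hN).1 φ' le_rfl c (by simp [sizeS] at hc; omega)]
    | and φ₁ φ₂ =>
      have h1 : sizeS φ₁ < N := by simp [sizeS] at hφ; omega
      have h2 : sizeS φ₂ < N := by simp [sizeS] at hφ; omega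
      simp only [SatS]
      rw [(ih _ h1).1 φ₁ le_rfl c (by simp [sizeS] at hc; omega),
        (ih _ h2).1 φ₂ le_rfl c (by simp [sizeS] at hc; omega)]
    | cnt K φ' =>
      have hN : sizeS φ' < N := by simp [sizeS] at hφ; omega
      have hc' : sizeS φ' + c + 2 ≤ m := by simp [sizeS] at hc; omega
      have hφ'pos := sizeS_pos φ'
      simp only [SatS]
      have hd : ∀ d : ℕ,
          (mainNode c ++ [d] ∈ Ttree m ∧ SatS (Ttree m) KLab φ' (mainNode c ++ [d])) ↔
          (mainNode (c+1) ++ [d] ∈ Ttree m ∧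
            SatS (Ttree m) KLab φ' (mainNode (c+1) ++ [d])) := by
        intro d
        match d with
        | 0 =>
          rw [← mainNode_succ, ← mainNode_succ]
          simp only [mainNode_mem, true_and]
          exact (ih _ hN).1 φ' le_rfl (c + 1) (by omega)
        | 1 =>
          have e1 : mainNode c ++ [1] = sideNode c 0 := rfl
          have e2 : mainNode (c+1) ++ [1] = sideNode (c+1) 0 := rfl
          rw [e1, e2]
          have hm1 : sideNode c 0 ∈ Ttree m := sideNode_mem 0 (by omega)
          have hm2 : sideNode (c+1) 0 ∈ Ttree m := sideNode_mem 0 (by omega)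
          simp only [hm1, hm2, true_and]
          exact (RIG m (sizeS φ')).1 φ' le_rfl c (c+1) 0 (by omega) (by omega)
        | (d+2) =>
          have h1 : mainNode c ++ [d+2] ∉ Ttree m := by rw [childMain]; omega
          have h2 : mainNode (c+1) ++ [d+2] ∉ Ttree m := by rw [childMain]; omega
          simp [h1, h2]
      exact exists_congr fun s => and_congr Iff.rfl
        (forall_congr' fun d => forall_congr' fun _ => hd d)
    | ex ψ' =>
      have hN : sizeP ψ' < N := by simp [sizeS] at hφ; omega
      have hsz : sizeP ψ' + c + 2 ≤ m := by simp [sizeS] at hc; omega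
      have hSHB := ((ih _ hN).2 ψ' le_rfl).1
      have hFAR := ((ih _ hN).2 ψ' le_rfl).2.1
      have hNEAR := ((ih _ hN).2 ψ' le_rfl).2.2
      have hxd := xdP_lt ψ'
      have hpos := sizeP_pos ψ'
      simp only [SatS]
      constructor
      · rintro ⟨π, hπ, hs⟩
        rcases classifyMain hπ with hB | ⟨t, hct, htm, hA⟩
        · have hπe : π = mpath c := by
            funext j; rw [hB j]; simp [mpath, Nat.add_comm]
          subst hπe
          refine ⟨mpath (c+1), isPath_mpath m (c+1), ?_⟩
          rw [satp_mpath]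
          exact (hSHB c (by omega)).1 ((satp_mpath ψ' c).1 hs)
        · have hπe : π = pA c t := funext hA
          subst hπe
          by_cases hfar : c + xdP ψ' < t
          · refine ⟨pA (c+1) t, isPath_pA (by omega) htm, ?_⟩
            rw [satp_pA_succ]
            exact (hFAR c t 0 (by omega) (by omega)).1 hs
          · refine ⟨pA (c+1) (t+1), isPath_pA (by omega) (by omega), ?_⟩
            exact (hNEAR c t 0 hct (by omega) (by omega)).1 hs
      · rintro ⟨π, hπ, hs⟩
        rcases classifyMain hπ with hB | ⟨t', hct, htm, hA⟩
        · have hπe : π = mpath (c+1) := by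
            funext j; rw [hB j]; simp [mpath, Nat.add_comm]
          subst hπe
          refine ⟨mpath c, isPath_mpath m c, ?_⟩
          rw [satp_mpath]
          exact (hSHB c (by omega)).2 ((satp_mpath ψ' (c+1)).1 hs)
        · have hπe : π = pA (c+1) t' := funext hA
          subst hπe
          by_cases hfar : c + xdP ψ' < t'
          · refine ⟨pA c t', isPath_pA (by omega) htm, ?_⟩
            exact (hFAR c t' 0 (by omega) (by omega)).2 ((satp_pA_succ ψ' c t').1 hs)
          · have htm' : t' ≤ m := by omega
            have ht'1 : t' - 1 + 1 = t' := by omega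
            refine ⟨pA c (t'-1), isPath_pA (by omega) (by omega), ?_⟩
            have hne := hNEAR c (t'-1) 0 (by omega) (by omega) (by omega)
            rw [ht'1] at hne
            exact hne.2 hs
  refine ⟨part1, ?_⟩
  intro ψ hψ
  refine ⟨?_, ?_, ?_⟩
  -- SHBP
  · intro i hi
    cases ψ with
    | state φ =>
      simp only [SatP]
      exact part1 φ (by simpa [sizeP] using hψ) i (by simpa [sizeP] using hi)
    | not ψ' =>
      have hN : sizeP ψ' < N := by simp [sizeP] at hψ; omega
      simp only [SatP]
      rw [((ih _ hN).2 ψ' le_rfl).1 i (by simp [sizeP] at hi; omega)]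
    | and ψ₁ ψ₂ =>
      have h1 : sizeP ψ₁ < N := by simp [sizeP] at hψ; omega
      have h2 : sizeP ψ₂ < N := by simp [sizeP] at hψ; omega
      simp only [SatP]
      rw [((ih _ h1).2 ψ₁ le_rfl).1 i (by simp [sizeP] at hi; omega),
        ((ih _ h2).2 ψ₂ le_rfl).1 i (by simp [sizeP] at hi; omega)]
    | next ψ' =>
      have hN : sizeP ψ' < N := by simp [sizeP] at hψ; omega
      simp only [SatP]
      exact ((ih _ hN).2 ψ' le_rfl).1 (i+1) (by simp [sizeP] at hi; omega)
    | until_ ψ₁ χ =>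
      have h1 : sizeP ψ₁ < N := by simp [sizeP] at hψ; omega
      have h2 : sizeP χ < N := by simp [sizeP] at hψ; omega
      have hS1 := ((ih _ h1).2 ψ₁ le_rfl).1
      have hS2 := ((ih _ h2).2 χ le_rfl).1
      have hi1 : sizeP ψ₁ + i + 1 ≤ m := by simp [sizeP] at hi; omega
      have hi2 : sizeP χ + i + 1 ≤ m := by simp [sizeP] at hi; omega
      simp only [SatP]
      constructor
      · rintro ⟨j, hij, hc, hu⟩
        rcases eq_or_lt_of_le hij with he | hlt
        · rw [← he] at hc
          exact ⟨i + 1, le_rfl, (hS2 i hi2).1 hc, fun l hl1 hl2 => absurd hl2 (by omega)⟩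
        · exact ⟨j, by omega, hc, fun l hl1 hl2 => hu l (by omega) hl2⟩
      · rintro ⟨j, hij, hc, hu⟩
        rcases eq_or_lt_of_le hij with he | hlt
        · rw [← he] at hc
          exact ⟨i, le_rfl, (hS2 i hi2).2 hc, fun l hl1 hl2 => absurd hl2 (by omega)⟩
        · have hψ1 : SatP (Ttree m) KLab ψ₁ mainNode i :=
            (hS1 i hi1).2 (hu (i + 1) le_rfl hlt)
          refine ⟨j, by omega, hc, fun l hl1 hl2 => ?_⟩
          rcases eq_or_lt_of_le hl1 with rfl | hl'
          · exact hψ1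
          · exact hu l (by omega) hl2
  -- FARP
  · intro c t j hxj hsz
    cases ψ with
    | state φ =>
      have hx0 : xdP (PForm.state φ) = 0 := rfl
      rw [hx0] at hxj
      simp only [SatP]
      have e1 : pA c t j = mainNode (c + j) := pA_main j (by omega)
      have e2 : pA c t (j+1) = mainNode (c + j + 1) := by
        rw [pA_main (j+1) (by omega), show c + (j+1) = c + j + 1 by omega]
      rw [e1, e2]
      exact part1 φ (by simpa [sizeP] using hψ) (c + j) (by simpa [sizeP] using hsz)
    | not ψ' =>
      have hN : sizeP ψ' < N := by simp [sizeP] at hψ; omega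
      simp only [xdP] at hxj
      simp only [SatP]
      rw [((ih _ hN).2 ψ' le_rfl).2.1 c t j hxj (by simp [sizeP] at hsz; omega)]
    | and ψ₁ ψ₂ =>
      have h1 : sizeP ψ₁ < N := by simp [sizeP] at hψ; omega
      have h2 : sizeP ψ₂ < N := by simp [sizeP] at hψ; omega
      simp only [xdP] at hxj
      have hm1 := le_max_left (xdP ψ₁) (xdP ψ₂)
      have hm2 := le_max_right (xdP ψ₁) (xdP ψ₂)
      have hx1 : c + j + xdP ψ₁ < t :=
        lt_of_le_of_lt (Nat.add_le_add_left hm1 _) hxj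
      have hx2 : c + j + xdP ψ₂ < t :=
        lt_of_le_of_lt (Nat.add_le_add_left hm2 _) hxj
      simp only [SatP]
      rw [((ih _ h1).2 ψ₁ le_rfl).2.1 c t j hx1 (by simp [sizeP] at hsz; omega),
        ((ih _ h2).2 ψ₂ le_rfl).2.1 c t j hx2 (by simp [sizeP] at hsz; omega)]
    | next ψ' =>
      have hN : sizeP ψ' < N := by simp [sizeP] at hψ; omega
      simp only [xdP] at hxj
      simp only [SatP]
      exact ((ih _ hN).2 ψ' le_rfl).2.1 c t (j+1)
        (by omega) (by simp [sizeP] at hsz; omega)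
    | until_ ψ₁ χ =>
      have h1 : sizeP ψ₁ < N := by simp [sizeP] at hψ; omega
      have h2 : sizeP χ < N := by simp [sizeP] at hψ; omega
      simp only [xdP] at hxj
      have hm1 := le_max_left (xdP ψ₁) (xdP χ)
      have hm2 := le_max_right (xdP ψ₁) (xdP χ)
      have hx1 : c + j + xdP ψ₁ < t :=
        lt_of_le_of_lt (Nat.add_le_add_left hm1 _) hxj
      have hx2 : c + j + xdP χ < t :=
        lt_of_le_of_lt (Nat.add_le_add_left hm2 _) hxj
      have hF1 := ((ih _ h1).2 ψ₁ le_rfl).2.1 c t j hx1 (by simp [sizeP] at hsz; omega)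
      have hF2 := ((ih _ h2).2 χ le_rfl).2.1 c t j hx2 (by simp [sizeP] at hsz; omega)
      simp only [SatP]
      constructor
      · rintro ⟨j', hij, hc, hu⟩
        rcases eq_or_lt_of_le hij with he | hlt
        · rw [← he] at hc
          exact ⟨j + 1, le_rfl, hF2.1 hc, fun l hl1 hl2 => absurd hl2 (by omega)⟩
        · exact ⟨j', by omega, hc, fun l hl1 hl2 => hu l (by omega) hl2⟩
      · rintro ⟨j', hij, hc, hu⟩
        rcases eq_or_lt_of_le hij with he | hlt
        · rw [← he] at hc
          exact ⟨j, le_rfl, hF2.2 hc, fun l hl1 hl2 => absurd hl2 (by omega)⟩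
        · have hψ1 : SatP (Ttree m) KLab ψ₁ (pA c t) j :=
            hF1.2 (hu (j + 1) le_rfl hlt)
          refine ⟨j', by omega, hc, fun l hl1 hl2 => ?_⟩
          rcases eq_or_lt_of_le hl1 with rfl | hl'
          · exact hψ1
          · exact hu l (by omega) hl2
  -- NEARP
  · intro c t j hct htm hsz
    cases ψ with
    | state φ =>
      simp only [SatP]
      by_cases hj : c + j ≤ t
      · have e1 : pA c t j = mainNode (c + j) := pA_main j hj
        have e2 : pA (c+1) (t+1) j = mainNode (c + j + 1) := by
          rw [pA_main j (by omega : c + 1 + j ≤ t + 1), show c + 1 + j = c + j + 1 by omega]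
        rw [e1, e2]
        refine part1 φ (by simpa [sizeP] using hψ) (c + j) ?_
        have : sizeS φ + t + 1 ≤ m := by simpa [sizeP, xdP] using hsz
        omega
      · have e1 : pA c t j = sideNode t (c + j - t - 1) := pA_side j hj
        have e2 : pA (c+1) (t+1) j = sideNode (t+1) (c + j - t - 1) := by
          rw [pA_side j (by omega : ¬ c + 1 + j ≤ t + 1),
            show c + 1 + j - (t+1) - 1 = c + j - t - 1 by omega]
        rw [e1, e2]
        exact (RIG m (sizeS φ)).1 φ le_rfl t (t+1) _ (by omega) (by omega)
    | not ψ' =>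
      have hN : sizeP ψ' < N := by simp [sizeP] at hψ; omega
      simp only [SatP]
      rw [((ih _ hN).2 ψ' le_rfl).2.2 c t j hct htm (by simp [sizeP, xdP] at hsz ⊢; omega)]
    | and ψ₁ ψ₂ =>
      have h1 : sizeP ψ₁ < N := by simp [sizeP] at hψ; omega
      have h2 : sizeP ψ₂ < N := by simp [sizeP] at hψ; omega
      have hxl1 := xdP_lt ψ₁
      have hxl2 := xdP_lt ψ₂
      simp only [sizeP, xdP] at hsz
      have hc1 : sizeP ψ₁ + t + 1 ≤ m + xdP ψ₁ := by
        rcases max_choice (xdP ψ₁) (xdP ψ₂) with he | he <;> rw [he] at hsz <;> omega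
      have hc2 : sizeP ψ₂ + t + 1 ≤ m + xdP ψ₂ := by
        rcases max_choice (xdP ψ₁) (xdP ψ₂) with he | he <;> rw [he] at hsz <;> omega
      simp only [SatP]
      rw [((ih _ h1).2 ψ₁ le_rfl).2.2 c t j hct htm hc1,
        ((ih _ h2).2 ψ₂ le_rfl).2.2 c t j hct htm hc2]
    | next ψ' =>
      have hN : sizeP ψ' < N := by simp [sizeP] at hψ; omega
      simp only [SatP]
      exact ((ih _ hN).2 ψ' le_rfl).2.2 c t (j+1) hct htm
        (by simp [sizeP, xdP] at hsz ⊢; omega)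
    | until_ ψ₁ χ =>
      have h1 : sizeP ψ₁ < N := by simp [sizeP] at hψ; omega
      have h2 : sizeP χ < N := by simp [sizeP] at hψ; omega
      have hxl1 := xdP_lt ψ₁
      have hxl2 := xdP_lt χ
      simp only [sizeP, xdP] at hsz
      have hc1 : sizeP ψ₁ + t + 1 ≤ m + xdP ψ₁ := by
        rcases max_choice (xdP ψ₁) (xdP χ) with he | he <;> rw [he] at hsz <;> omega
      have hc2 : sizeP χ + t + 1 ≤ m + xdP χ := by
        rcases max_choice (xdP ψ₁) (xdP χ) with he | he <;> rw [he] at hsz <;> omega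
      simp only [SatP]
      exact exists_congr fun j' => and_congr Iff.rfl
        (and_congr (((ih _ h2).2 χ le_rfl).2.2 c t j' hct htm hc2)
          (forall_congr' fun l => imp_congr Iff.rfl (imp_congr Iff.rfl
            (((ih _ h1).2 ψ₁ le_rfl).2.2 c t l hct htm hc1))))

end Stmt14

/-- Indistinguishability along the main path of `T_{n+1}`: for `n ≥ 1`,
`0 ≤ i ≤ n` and any CCTL* path formula `ψ` with `|ψ| ≤ n − i`, `ψ` holds at
position `i` of the main path of `T_{n+1}` iff it holds at position `i + 1`. -/
theorem stmt14 (n : ℕ) (hn : 1 ≤ n) (i : ℕ) (hi : i ≤ n)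
    (ψ : PForm Unit) (hψ : sizeP ψ ≤ n - i) :
    SatP (Ttree (n + 1)) KLab ψ mainNode i ↔
    SatP (Ttree (n + 1)) KLab ψ mainNode (i + 1) := by
  exact ((Stmt14.master (n + 1) (sizeP ψ)).2 ψ le_rfl).1 i (by omega)
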